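/- Let β > 0, let ℓ > 0 and let Ω = (0,ℓ) × (0,ℓ) ⊂ ℝ² be the open square of side ℓ, whose Euclidean diameter is D = ℓ√2. Then: (i) if β ≥ √2/ℓ (i.e. β ≥ 2/D), then s_β(Ω) = (2 + βℓ)/((2 + √2)β), i.e. λ_{2,∞}(Ω) = (1 + √2/2)β / (1 + (√2/2)β D/2); (ii) if β < √2/ℓ (i.e. β < 2/D), then s_β(Ω) = ℓ/√2 = D/2, i.e. λ_{2,∞}(Ω) = 2/D. -/

import Mathlib

open Set Metric

/-- The normalized cone of height 1 and base radius `t` centered at `x`. -/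
noncomputable def cone {n : ℕ} (x : EuclideanSpace ℝ (Fin n)) (t : ℝ)
    (y : EuclideanSpace ℝ (Fin n)) : ℝ :=
  max (t - ‖y - x‖) 0 / t

/-- `t > 0` is admissible for `Ω` and `β`. -/
def admissible {n : ℕ} (Ω : Set (EuclideanSpace ℝ (Fin n))) (β t : ℝ) : Prop :=
  0 < t ∧ ∃ x₁ ∈ closure Ω, ∃ x₂ ∈ closure Ω, 2 * t ≤ ‖x₁ - x₂‖ ∧
    (∀ y ∈ frontier Ω, cone x₁ t y ≤ 1 / (β * t)) ∧
    (∀ y ∈ frontier Ω, cone x₂ t y ≤ 1 / (β * t))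

/-- `s_β(Ω)`, the supremum of admissible radii. -/
noncomputable def sGeom {n : ℕ} (Ω : Set (EuclideanSpace ℝ (Fin n))) (β : ℝ) : ℝ :=
  sSup {t | admissible Ω β t}

/-- The smallest Lipschitz constant of `w` on the set `s`. -/
noncomputable def lipConst {n : ℕ} (s : Set (EuclideanSpace ℝ (Fin n)))
    (w : EuclideanSpace ℝ (Fin n) → ℝ) : ℝ :=
  sInf {L | 0 ≤ L ∧ ∀ x ∈ s, ∀ y ∈ s, |w x - w y| ≤ L * ‖x - y‖}



open Topology Filter

noncomputable abbrev Ssq (l : ℝ) : Set (EuclideanSpace ℝ (Fin 2)) :=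
  {p : EuclideanSpace ℝ (Fin 2) | p 0 ∈ Ioo (0:ℝ) l ∧ p 1 ∈ Ioo (0:ℝ) l}
noncomputable abbrev Ksq (l : ℝ) : Set (EuclideanSpace ℝ (Fin 2)) :=
  {p : EuclideanSpace ℝ (Fin 2) | p 0 ∈ Icc (0:ℝ) l ∧ p 1 ∈ Icc (0:ℝ) l}

noncomputable def pt (a b : ℝ) : EuclideanSpace ℝ (Fin 2) := (WithLp.equiv 2 (Fin 2 → ℝ)).symm ![a, b]

@[simp] lemma pt_apply_zero (a b : ℝ) : pt a b 0 = a := by simp [pt]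
@[simp] lemma pt_apply_one (a b : ℝ) : pt a b 1 = b := by simp [pt]

lemma cont_coord (i : Fin 2) : Continuous fun p : EuclideanSpace ℝ (Fin 2) => p i :=
  (EuclideanSpace.proj i : EuclideanSpace ℝ (Fin 2) →L[ℝ] ℝ).continuous

lemma isOpen_Ssq (l : ℝ) : IsOpen (Ssq l) :=
  ((isOpen_Ioo.preimage (cont_coord 0)).inter (isOpen_Ioo.preimage (cont_coord 1)))

lemma closure_Ssq (l : ℝ) (hl : 0 < l) : closure (Ssq l) = Ksq l := by
  apply Subset.antisymm
  · apply closure_minimal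
    · intro p hp
      exact ⟨⟨hp.1.1.le, hp.1.2.le⟩, ⟨hp.2.1.le, hp.2.2.le⟩⟩
    · exact (isClosed_Icc.preimage (cont_coord 0)).inter (isClosed_Icc.preimage (cont_coord 1))
  · intro p hp
    set c : EuclideanSpace ℝ (Fin 2) := pt (l/2) (l/2) with hc
    have hc0 : c 0 = l/2 := by simp [hc]
    have hc1 : c 1 = l/2 := by simp [hc]
    have key : ∀ ε ∈ Ioc (0:ℝ) 1, p + ε • (c - p) ∈ Ssq l := by
      rintro ε ⟨hε0, hε1⟩
      have e0 : (p + ε • (c - p)) 0 = p 0 + ε * (l/2 - p 0) := by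
        simp [PiLp.add_apply, PiLp.smul_apply, PiLp.sub_apply, hc0, smul_eq_mul]
      have e1 : (p + ε • (c - p)) 1 = p 1 + ε * (l/2 - p 1) := by
        simp [PiLp.add_apply, PiLp.smul_apply, PiLp.sub_apply, hc1, smul_eq_mul]
      obtain ⟨⟨h1, h2⟩, h3, h4⟩ := hp
      constructor
      · rw [e0]; constructor <;> nlinarith
      · rw [e1]; constructor <;> nlinarith
    have hcont : Continuous fun ε : ℝ => p + ε • (c - p) := by continuity
    have htend : Filter.Tendsto (fun ε : ℝ => p + ε • (c - p)) (𝓝[>] (0:ℝ)) (𝓝 p) := by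
      have := (hcont.tendsto 0).mono_left (nhdsWithin_le_nhds (s := Ioi (0:ℝ)))
      simpa using this
    exact mem_closure_of_tendsto htend
      (Filter.eventually_of_mem (Ioc_mem_nhdsGT_of_mem ⟨le_refl 0, one_pos⟩) key)

lemma frontier_Ssq (l : ℝ) (hl : 0 < l) : frontier (Ssq l) = Ksq l \ Ssq l := by
  rw [frontier, closure_Ssq l hl, (isOpen_Ssq l).interior_eq]

lemma norm_eq2 (z : EuclideanSpace ℝ (Fin 2)) : ‖z‖ = Real.sqrt ((z 0)^2 + (z 1)^2) := by
  rw [EuclideanSpace.norm_eq, Fin.sum_univ_two]; simp [sq_abs]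

lemma coord_le_norm (z : EuclideanSpace ℝ (Fin 2)) (i : Fin 2) : |z i| ≤ ‖z‖ := by
  have h : (z i)^2 ≤ (z 0)^2 + (z 1)^2 := by
    fin_cases i <;> simp <;> nlinarith [sq_nonneg (z 0), sq_nonneg (z 1)]
  calc |z i| = Real.sqrt ((z i)^2) := (Real.sqrt_sq_eq_abs _).symm
    _ ≤ Real.sqrt ((z 0)^2 + (z 1)^2) := Real.sqrt_le_sqrt h
    _ = ‖z‖ := (norm_eq2 z).symm

lemma norm_le_two (z : EuclideanSpace ℝ (Fin 2)) (a : ℝ) (ha : 0 ≤ a)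
    (h0 : |z 0| ≤ a) (h1 : |z 1| ≤ a) : ‖z‖ ≤ Real.sqrt 2 * a := by
  rw [norm_eq2]
  have h : (z 0)^2 + (z 1)^2 ≤ 2 * a^2 := by
    nlinarith [sq_abs (z 0), sq_abs (z 1), abs_nonneg (z 0), abs_nonneg (z 1)]
  calc Real.sqrt ((z 0)^2 + (z 1)^2) ≤ Real.sqrt (2 * a^2) := Real.sqrt_le_sqrt h
    _ = Real.sqrt 2 * a := by rw [Real.sqrt_mul (by norm_num), Real.sqrt_sq ha]

lemma norm_diag (a : ℝ) (ha : 0 ≤ a) (z : EuclideanSpace ℝ (Fin 2))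
    (h0 : z 0 = a ∨ z 0 = -a) (h1 : z 1 = a ∨ z 1 = -a) : ‖z‖ = Real.sqrt 2 * a := by
  rw [norm_eq2]
  have h : (z 0)^2 + (z 1)^2 = 2 * a^2 := by rcases h0 with h0|h0 <;> rcases h1 with h1|h1 <;>
    rw [h0, h1] <;> ring
  rw [h, Real.sqrt_mul (by norm_num), Real.sqrt_sq ha]

lemma norm_axis (z : EuclideanSpace ℝ (Fin 2)) :
    (z 1 = 0 → ‖z‖ = |z 0|) ∧ (z 0 = 0 → ‖z‖ = |z 1|) := by
  constructor <;> intro h <;> rw [norm_eq2, h] <;> simp [Real.sqrt_sq_eq_abs]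

noncomputable def mdist (l : ℝ) (x : EuclideanSpace ℝ (Fin 2)) : ℝ :=
  min (min (x 0) (l - x 0)) (min (x 1) (l - x 1))

lemma cone_le_iff (β t : ℝ) (hβ : 0 < β) (ht : 0 < t) (x y : EuclideanSpace ℝ (Fin 2)) :
    cone x t y ≤ 1 / (β * t) ↔ t - 1/β ≤ ‖y - x‖ := by
  rw [cone, div_le_div_iff₀ ht (by positivity)]
  constructor
  · intro h1
    have h2 : t - ‖y - x‖ ≤ (t - ‖y - x‖) ⊔ 0 := le_max_left _ _
    have h3 : (t - ‖y - x‖) ⊔ 0 ≤ 1/β := by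
      rw [le_div_iff₀ hβ]; nlinarith
    have := h2.trans h3
    linarith
  · intro h
    have h3 : (t - ‖y - x‖) ⊔ 0 ≤ 1/β := by
      apply max_le
      · linarith
      · positivity
    rw [le_div_iff₀ hβ] at h3; nlinarith

lemma cone_cond (β l t : ℝ) (hβ : 0 < β) (hl : 0 < l) (ht : 0 < t)
    (x : EuclideanSpace ℝ (Fin 2)) (hx : x ∈ Ksq l) :
    (∀ y ∈ frontier (Ssq l), cone x t y ≤ 1 / (β * t)) ↔ t - 1/β ≤ mdist l x := by
  obtain ⟨⟨hx00, hx0l⟩, hx10, hx1l⟩ := hx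
  have hfr := frontier_Ssq l hl
  simp only [cone_le_iff β t hβ ht x]
  constructor
  · intro h
    -- apply to the four projection points
    have m0 : pt 0 (x 1) ∈ frontier (Ssq l) := by
      rw [hfr]
      refine ⟨⟨by simp [hl.le], by simp [hx10, hx1l]⟩, ?_⟩
      intro hmem
      exact absurd (by simpa using hmem.1.1) (lt_irrefl 0)
    have ml : pt l (x 1) ∈ frontier (Ssq l) := by
      rw [hfr]
      refine ⟨⟨by simp [hl.le], by simp [hx10, hx1l]⟩, ?_⟩
      intro hmem
      exact absurd (by simpa using hmem.1.2) (lt_irrefl l)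
    have m2 : pt (x 0) 0 ∈ frontier (Ssq l) := by
      rw [hfr]
      refine ⟨⟨by simp [hx00, hx0l], by simp [hl.le]⟩, ?_⟩
      intro hmem
      exact absurd (by simpa using hmem.2.1) (lt_irrefl 0)
    have m3 : pt (x 0) l ∈ frontier (Ssq l) := by
      rw [hfr]
      refine ⟨⟨by simp [hx00, hx0l], by simp [hl.le]⟩, ?_⟩
      intro hmem
      exact absurd (by simpa using hmem.2.2) (lt_irrefl l)
    have e0 : ‖pt 0 (x 1) - x‖ = x 0 := by
      rw [(norm_axis _).1 (by simp), PiLp.sub_apply, pt_apply_zero, abs_of_nonpos (by linarith)]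
      ring
    have el : ‖pt l (x 1) - x‖ = l - x 0 := by
      rw [(norm_axis _).1 (by simp), PiLp.sub_apply, pt_apply_zero, abs_of_nonneg (by linarith)]
    have e2 : ‖pt (x 0) 0 - x‖ = x 1 := by
      rw [(norm_axis _).2 (by simp), PiLp.sub_apply, pt_apply_one, abs_of_nonpos (by linarith)]
      ring
    have e3 : ‖pt (x 0) l - x‖ = l - x 1 := by
      rw [(norm_axis _).2 (by simp), PiLp.sub_apply, pt_apply_one, abs_of_nonneg (by linarith)]
    have i0 := h _ m0; rw [e0] at i0
    have i1 := h _ ml; rw [el] at i1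
    have i2 := h _ m2; rw [e2] at i2
    have i3 := h _ m3; rw [e3] at i3
    exact le_min (le_min i0 i1) (le_min i2 i3)
  · intro h y hy
    rw [hfr] at hy
    obtain ⟨⟨⟨hy00, hy0l⟩, hy10, hy1l⟩, hyn⟩ := hy
    have hm0 : t - 1/β ≤ x 0 := le_trans h (le_trans (min_le_left _ _) (min_le_left _ _))
    have hm1 : t - 1/β ≤ l - x 0 := le_trans h (le_trans (min_le_left _ _) (min_le_right _ _))
    have hm2 : t - 1/β ≤ x 1 := le_trans h (le_trans (min_le_right _ _) (min_le_left _ _))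
    have hm3 : t - 1/β ≤ l - x 1 := le_trans h (le_trans (min_le_right _ _) (min_le_right _ _))
    have hcoord : y 0 = 0 ∨ y 0 = l ∨ y 1 = 0 ∨ y 1 = l := by
      by_contra hc
      push_neg at hc
      obtain ⟨c1, c2, c3, c4⟩ := hc
      exact hyn ⟨⟨lt_of_le_of_ne hy00 (Ne.symm c1), lt_of_le_of_ne hy0l c2⟩,
        lt_of_le_of_ne hy10 (Ne.symm c3), lt_of_le_of_ne hy1l c4⟩
    have k0 := coord_le_norm (y - x) 0
    have k1 := coord_le_norm (y - x) 1
    rw [PiLp.sub_apply] at k0 k1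
    rcases hcoord with hc|hc|hc|hc
    · rw [hc] at k0
      calc t - 1/β ≤ x 0 := hm0
        _ = |0 - x 0| := by rw [abs_of_nonpos (by linarith)]; ring
        _ ≤ ‖y - x‖ := k0
    · rw [hc] at k0
      exact le_trans hm1 (le_trans (le_abs_self _) k0)
    · rw [hc] at k1
      calc t - 1/β ≤ x 1 := hm2
        _ = |0 - x 1| := by rw [abs_of_nonpos (by linarith)]; ring
        _ ≤ ‖y - x‖ := k1
    · rw [hc] at k1
      exact le_trans hm3 (le_trans (le_abs_self _) k1)

lemma adm_iff (β l : ℝ) (hβ : 0 < β) (hl : 0 < l) (t : ℝ) :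
    admissible (Ssq l) β t ↔ 0 < t ∧ ∃ x₁ ∈ Ksq l, ∃ x₂ ∈ Ksq l,
      2*t ≤ ‖x₁ - x₂‖ ∧ t - 1/β ≤ mdist l x₁ ∧ t - 1/β ≤ mdist l x₂ := by
  unfold admissible
  constructor
  · rintro ⟨ht, x₁, hx₁, x₂, hx₂, hd, hc1, hc2⟩
    rw [closure_Ssq l hl] at hx₁ hx₂
    exact ⟨ht, x₁, hx₁, x₂, hx₂, hd, (cone_cond β l t hβ hl ht x₁ hx₁).1 hc1,
      (cone_cond β l t hβ hl ht x₂ hx₂).1 hc2⟩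
  · rintro ⟨ht, x₁, hx₁, x₂, hx₂, hd, hm1, hm2⟩
    refine ⟨ht, x₁, ?_, x₂, ?_, hd, ?_, ?_⟩
    · rw [closure_Ssq l hl]; exact hx₁
    · rw [closure_Ssq l hl]; exact hx₂
    · exact (cone_cond β l t hβ hl ht x₁ hx₁).2 hm1
    · exact (cone_cond β l t hβ hl ht x₂ hx₂).2 hm2

lemma sqrt2_facts : 0 < Real.sqrt 2 ∧ Real.sqrt 2 ^ 2 = 2 ∧ 1 < Real.sqrt 2 := by
  have h0 : 0 < Real.sqrt 2 := Real.sqrt_pos.2 (by norm_num)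
  have h1 : Real.sqrt 2 ^ 2 = 2 := Real.sq_sqrt (by norm_num)
  exact ⟨h0, h1, by nlinarith⟩

set_option maxHeartbeats 1000000 in
lemma adm_set_one (β l : ℝ) (hβ : 0 < β) (hl : 0 < l) (hb : Real.sqrt 2 / l ≤ β) :
    {t | admissible (Ssq l) β t} = Ioc 0 ((2 + β * l) / ((2 + Real.sqrt 2) * β)) := by
  obtain ⟨hs0, hs2, hs1⟩ := sqrt2_facts
  set s := Real.sqrt 2 with hsdef
  set T := (2 + β * l) / ((2 + s) * β) with hT
  have hden : 0 < (2 + s) * β := by positivity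
  have hTeq : T * ((2 + s) * β) = 2 + β * l := div_mul_cancel₀ _ (ne_of_gt hden)
  have hβl : s ≤ β * l := (div_le_iff₀ hl).1 hb
  have h1β : 1/β ≤ T := by
    rw [hT, le_div_iff₀ hden]
    have : 1/β * ((2 + s) * β) = 2 + s := by field_simp
    rw [this]; linarith
  have hT0 : 0 < T := lt_of_lt_of_le (by positivity) h1β
  clear_value T
  ext t
  simp only [mem_setOf_eq, mem_Ioc, adm_iff β l hβ hl t]
  constructor
  · rintro ⟨ht, x₁, hx₁, x₂, hx₂, hd, hm1, hm2⟩
    refine ⟨ht, ?_⟩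
    obtain ⟨⟨a00, a0l⟩, a10, a1l⟩ := hx₁
    obtain ⟨⟨b00, b0l⟩, b10, b1l⟩ := hx₂
    set r := max (t - 1/β) 0 with hr
    have hra0 : r ≤ x₁ 0 := max_le (le_trans hm1 ((min_le_left _ _).trans (min_le_left _ _))) a00
    have hra0' : r ≤ l - x₁ 0 := max_le (le_trans hm1 ((min_le_left _ _).trans (min_le_right _ _))) (by linarith)
    have hra1 : r ≤ x₁ 1 := max_le (le_trans hm1 ((min_le_right _ _).trans (min_le_left _ _))) a10
    have hra1' : r ≤ l - x₁ 1 := max_le (le_trans hm1 ((min_le_right _ _).trans (min_le_right _ _))) (by linarith)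
    have hrb0 : r ≤ x₂ 0 := max_le (le_trans hm2 ((min_le_left _ _).trans (min_le_left _ _))) b00
    have hrb0' : r ≤ l - x₂ 0 := max_le (le_trans hm2 ((min_le_left _ _).trans (min_le_right _ _))) (by linarith)
    have hrb1 : r ≤ x₂ 1 := max_le (le_trans hm2 ((min_le_right _ _).trans (min_le_left _ _))) b10
    have hrb1' : r ≤ l - x₂ 1 := max_le (le_trans hm2 ((min_le_right _ _).trans (min_le_right _ _))) (by linarith)
    have hlr : 0 ≤ l - 2*r := by linarith
    have hd0 : |(x₁ - x₂) 0| ≤ l - 2*r := by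
      rw [PiLp.sub_apply, abs_le]; constructor <;> linarith
    have hd1 : |(x₁ - x₂) 1| ≤ l - 2*r := by
      rw [PiLp.sub_apply, abs_le]; constructor <;> linarith
    have hnorm : ‖x₁ - x₂‖ ≤ s * (l - 2*r) := norm_le_two _ _ hlr hd0 hd1
    have A : 2*t ≤ s * (l - 2*r) := le_trans hd hnorm
    have B : t - 1/β ≤ r := le_max_left _ _
    have B' : β * (t - 1/β) ≤ β * r := mul_le_mul_of_nonneg_left B hβ.le
    rw [mul_sub, mul_one_div_cancel (ne_of_gt hβ)] at B'
    rw [hT, le_div_iff₀ hden]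
    have A' : β * (2*t) ≤ β * (s * (l - 2*r)) := mul_le_mul_of_nonneg_left A hβ.le
    have C : s * (β * t - 1) ≤ s * (β * r) := mul_le_mul_of_nonneg_left B' hs0.le
    nlinarith [A', C, hs2, hs0, hβ, mul_le_mul_of_nonneg_left A' hs0.le]
  · rintro ⟨ht, htT⟩
    set r := T - 1/β with hr
    have hr0 : 0 ≤ r := by rw [hr]; linarith
    have h2r : 2*r ≤ l := by
      have hTβ : 0 < T * β := mul_pos hT0 hβ
      have key : 2*(T*β) ≤ 2 + β*l := by nlinarith [hTeq, mul_pos hT0 hβ, hs0]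
      have : 2*r*β = 2*(T*β) - 2 := by rw [hr]; field_simp
      nlinarith [key, this, hβ]
    have hrl : r ≤ l := by linarith
    clear_value r
    refine ⟨ht, pt r r, ⟨⟨by simpa using hr0, by simpa using hrl⟩, by simpa using hr0, by simpa using hrl⟩,
      pt (l-r) (l-r), ⟨⟨by simp; linarith, by simp; linarith⟩, by simp; linarith, by simp; linarith⟩, ?_, ?_, ?_⟩
    · have hnd : ‖pt r r - pt (l-r) (l-r)‖ = s * (l - 2*r) := by
        apply norm_diag (l - 2*r) (by linarith)
        · right; rw [PiLp.sub_apply]; simp; ring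
        · right; rw [PiLp.sub_apply]; simp; ring
      rw [hnd]
      have hT2 : s * (T * ((2+s)*β)) = s * (2 + β*l) := by rw [hTeq]
      have goalkey : 2*T ≤ s * (l - 2*r) := by
        have hrβ : r * β = T*β - 1 := by rw [hr]; field_simp
        have hsr : s*(r*β) = s*(T*β) - s := by rw [hrβ]; ring
        nlinarith [hT2, hs2, hβ, hT0, mul_pos hT0 hβ, hsr]
      linarith
    · have : mdist l (pt r r) = min (min r (l - r)) (min r (l - r)) := by simp [mdist]
      rw [this]
      have h1 : t - 1/β ≤ r := by rw [hr]; linarith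
      have h2 : t - 1/β ≤ l - r := by linarith
      exact le_min (le_min h1 h2) (le_min h1 h2)
    · have : mdist l (pt (l-r) (l-r)) = min (min (l-r) (l-(l-r))) (min (l-r) (l-(l-r))) := by simp [mdist]
      rw [this]
      have h1 : t - 1/β ≤ l - r := by linarith
      have h2 : t - 1/β ≤ l - (l - r) := by rw [hr]; linarith
      exact le_min (le_min h1 h2) (le_min h1 h2)

set_option maxHeartbeats 1000000 in
lemma adm_set_two (β l : ℝ) (hβ : 0 < β) (hl : 0 < l) (hb : β < Real.sqrt 2 / l) :
    {t | admissible (Ssq l) β t} = Ioc 0 (l / Real.sqrt 2) := by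
  obtain ⟨hs0, hs2, hs1⟩ := sqrt2_facts
  set s := Real.sqrt 2 with hsdef
  have hβl : β * l < s := by
    rw [lt_div_iff₀ hl] at hb; linarith
  ext t
  simp only [mem_setOf_eq, mem_Ioc, adm_iff β l hβ hl t]
  constructor
  · rintro ⟨ht, x₁, hx₁, x₂, hx₂, hd, hm1, hm2⟩
    refine ⟨ht, ?_⟩
    obtain ⟨⟨a00, a0l⟩, a10, a1l⟩ := hx₁
    obtain ⟨⟨b00, b0l⟩, b10, b1l⟩ := hx₂
    have hd0 : |(x₁ - x₂) 0| ≤ l := by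
      rw [PiLp.sub_apply, abs_le]; constructor <;> linarith
    have hd1 : |(x₁ - x₂) 1| ≤ l := by
      rw [PiLp.sub_apply, abs_le]; constructor <;> linarith
    have hnorm : ‖x₁ - x₂‖ ≤ s * l := norm_le_two _ _ hl.le hd0 hd1
    have A : 2*t ≤ s * l := le_trans hd hnorm
    rw [le_div_iff₀ hs0]
    nlinarith
  · rintro ⟨ht, htT⟩
    have htβ : t ≤ 1/β := by
      have h1 : l/s ≤ 1/β := by
        rw [div_le_div_iff₀ hs0 hβ]; nlinarith
      linarith
    refine ⟨ht, pt 0 0, ⟨⟨by simp, by simp [hl.le]⟩, by simp, by simp [hl.le]⟩,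
      pt l l, ⟨⟨by simp [hl.le], by simp⟩, by simp [hl.le], by simp⟩, ?_, ?_, ?_⟩
    · have hnd : ‖pt 0 0 - pt l l‖ = s * l := by
        apply norm_diag l hl.le
        · right; rw [PiLp.sub_apply]; simp
        · right; rw [PiLp.sub_apply]; simp
      rw [hnd]
      rw [le_div_iff₀ hs0] at htT
      nlinarith
    · have e : mdist l (pt 0 0) = min (min 0 (l - 0)) (min 0 (l - 0)) := by simp [mdist]
      rw [e]
      have h1 : t - 1/β ≤ 0 := by linarith
      have h2 : t - 1/β ≤ l - 0 := by linarith
      exact le_min (le_min h1 h2) (le_min h1 h2)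
    · have e : mdist l (pt l l) = min (min l (l - l)) (min l (l - l)) := by simp [mdist]
      rw [e]
      have h1 : t - 1/β ≤ l := by linarith
      have h2 : t - 1/β ≤ l - l := by linarith
      exact le_min (le_min h1 h2) (le_min h1 h2)

theorem sGeom_of_square
    (β l : ℝ) (hβ : 0 < β) (hl : 0 < l)
    (Ω : Set (EuclideanSpace ℝ (Fin 2)))
    (hΩ : Ω = {p : EuclideanSpace ℝ (Fin 2) | p 0 ∈ Ioo (0:ℝ) l ∧ p 1 ∈ Ioo (0:ℝ) l}) :
    (Real.sqrt 2 / l ≤ β → sGeom Ω β = (2 + β * l) / ((2 + Real.sqrt 2) * β)) ∧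
    (β < Real.sqrt 2 / l → sGeom Ω β = l / Real.sqrt 2) := by
  obtain ⟨hs0, hs2, hs1⟩ := sqrt2_facts
  have hΩ' : Ω = Ssq l := hΩ
  subst hΩ'
  constructor
  · intro hb
    have hT0 : 0 < (2 + β * l) / ((2 + Real.sqrt 2) * β) := by positivity
    rw [sGeom, adm_set_one β l hβ hl hb, csSup_Ioc hT0]
  · intro hb
    have hT0 : 0 < l / Real.sqrt 2 := by positivity
    rw [sGeom, adm_set_two β l hβ hl hb, csSup_Ioc hT0]
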